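/- Let G = (V, E) be a finite directed acyclic graph whose vertices are elements of the ground set of a matroid M′. Suppose that every non-sink vertex u of G is spanned in M′ by its out-neighborhood δ⁺_G(u). Then for every set S of vertices of G which is independent in M′, there exists an injective function ψ_S : S → V such that, for every vertex u ∈ S, ψ_S(u) is a sink of G which is reachable from u by a directed path. -/

import Mathlib

open Set

/-- If `I` is independent and contained in the closure of an independent set `B`,
then `I.encard ≤ B.encard`. -/
lemma indep_encard_le_of_subset_closure {α : Type*} {M : Matroid α} {I B : Set α}
    (hI : M.Indep I) (hB : M.Indep B) (hIB : I ⊆ M.closure B) : I.encard ≤ B.encard := by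
  have hBbasis : M.IsBasis B (B ∪ I) := by
    refine hB.isBasis_of_subset_of_subset_closure subset_union_left ?_
    exact union_subset (M.subset_closure B hB.subset_ground) hIB
  obtain ⟨J, hJ, hIJ⟩ := hI.subset_isBasis_of_subset (subset_union_right (s := B))
    (union_subset hB.subset_ground (hIB.trans (M.closure_subset_ground B)))
  calc I.encard ≤ J.encard := encard_le_encard hIJ
    _ = B.encard := hJ.encard_eq_encard hBbasis

theorem exists_injective_map_to_reachable_sinks {α : Type*} (M : Matroid α)
    (V : Finset α) (hV : ↑V ⊆ M.E) (E : α → α → Prop)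
    (hE : ∀ u v, E u v → u ∈ V ∧ v ∈ V)
    (hacyclic : ∀ u, ¬ Relation.TransGen E u u)
    (hspan : ∀ u ∈ V, (∃ v, E u v) → u ∈ M.closure {v | E u v})
    (S : Finset α) (hSV : S ⊆ V) (hS : M.Indep ↑S) :
    ∃ ψ : α → α, Set.InjOn ψ ↑S ∧
      ∀ u ∈ S, ψ u ∈ V ∧ (∀ v, ¬ E (ψ u) v) ∧ Relation.ReflTransGen E u (ψ u) := by
  classical
  -- the set of sinks reachable from `u`
  set sk : α → Finset α := fun u =>
    V.filter (fun w => (∀ v, ¬ E w v) ∧ Relation.ReflTransGen E u w) with hsk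
  -- a measure that decreases along arcs
  set m : α → ℕ := fun u => (V.filter (fun w => Relation.ReflTransGen E u w)).card with hm
  have hmono : ∀ {a b w : α}, E a b → Relation.ReflTransGen E b w →
      Relation.ReflTransGen E a w := fun hab hbw => Relation.ReflTransGen.head hab hbw
  have hmlt : ∀ {a b : α}, E a b → m b < m a := by
    intro a b hab
    apply Finset.card_lt_card
    constructor
    · intro w hw
      simp only [Finset.mem_filter] at hw ⊢
      exact ⟨hw.1, hmono hab hw.2⟩
    · intro hsub
      have ha : a ∈ V.filter (fun w => Relation.ReflTransGen E a w) :=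
        Finset.mem_filter.2 ⟨(hE a b hab).1, Relation.ReflTransGen.refl⟩
      have := Finset.mem_filter.1 (hsub ha)
      exact hacyclic a (Relation.TransGen.head' hab this.2)
  -- key claim: every vertex is in the closure of its reachable sinks
  have key : ∀ n : ℕ, ∀ u ∈ V, m u = n → u ∈ M.closure ↑(sk u) := by
    intro n
    induction n using Nat.strong_induction_on with
    | _ n ih =>
    intro u huV hn
    by_cases hsink : ∀ v, ¬ E u v
    · have hu : u ∈ (sk u : Set α) := by
        simp only [hsk, Finset.coe_filter, mem_setOf_eq]
        exact ⟨huV, hsink, Relation.ReflTransGen.refl⟩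
      exact M.subset_closure _ (fun x hx => by
        simp only [hsk, Finset.coe_filter, mem_setOf_eq] at hx
        exact hV hx.1) hu
    · push_neg at hsink
      have hu : u ∈ M.closure {v | E u v} := hspan u huV hsink
      have hsub : {v | E u v} ⊆ M.closure ↑(sk u) := by
        intro v hv
        have hvV : v ∈ V := (hE u v hv).2
        have hvcl : v ∈ M.closure ↑(sk v) := ih (m v) (hn ▸ hmlt hv) v hvV rfl
        refine M.closure_subset_closure ?_ hvcl
        intro w hw
        simp only [hsk, Finset.coe_filter, mem_setOf_eq] at hw ⊢
        exact ⟨hw.1, hw.2.1, hmono hv hw.2.2⟩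
      exact M.closure_subset_closure_of_subset_closure hsub hu
  -- Hall's condition for the family `sk` restricted to `S`
  have hall : ∀ s : Finset ↥S, s.card ≤ (s.biUnion (fun u => sk ↑u)).card := by
    intro s
    set I : Finset α := s.image Subtype.val with hI
    have hIcard : I.card = s.card := Finset.card_image_of_injective _ Subtype.val_injective
    set X : Finset α := s.biUnion (fun u => sk ↑u) with hX
    have hXV : ↑X ⊆ (V : Set α) := by
      intro x hx
      simp only [hX, Finset.coe_biUnion, mem_iUnion] at hx
      obtain ⟨u, _, hu⟩ := hx
      exact Finset.mem_coe.2 (Finset.mem_of_mem_filter x hu)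
    have hIindep : M.Indep ↑I := by
      refine hS.subset ?_
      intro x hx
      simp only [hI, Finset.coe_image, mem_image] at hx
      obtain ⟨u, _, rfl⟩ := hx
      exact u.2
    have hIcl : ↑I ⊆ M.closure ↑X := by
      intro x hx
      simp only [hI, Finset.coe_image, mem_image] at hx
      obtain ⟨u, hu, rfl⟩ := hx
      refine M.closure_subset_closure ?_ (key (m ↑u) ↑u (hSV u.2) rfl)
      intro w hw
      simp only [hX, Finset.coe_biUnion, mem_iUnion]
      exact ⟨u, by simpa using hu, hw⟩
    obtain ⟨B, hB⟩ := M.exists_isBasis ↑X (hXV.trans hV)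
    have h1 : (↑I : Set α).encard ≤ B.encard :=
      indep_encard_le_of_subset_closure hIindep hB.indep
        (by rwa [← hB.closure_eq_closure] at hIcl)
    have h2 : B.encard ≤ (↑X : Set α).encard := encard_le_encard hB.subset
    have := h1.trans h2
    rw [encard_coe_eq_coe_finsetCard, encard_coe_eq_coe_finsetCard, Nat.cast_le] at this
    omega
  obtain ⟨f, hfinj, hf⟩ := (Finset.all_card_le_biUnion_card_iff_exists_injective
    (fun u : ↥S => sk ↑u)).1 hall
  refine ⟨fun x => if h : x ∈ S then f ⟨x, h⟩ else x, ?_, ?_⟩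
  · intro x hx y hy hxy
    simp only [Finset.mem_coe] at hx hy
    simp only [dif_pos hx, dif_pos hy] at hxy
    exact Subtype.ext_iff.1 (hfinj hxy)
  · intro u hu
    have := hf ⟨u, hu⟩
    simp only [hsk, Finset.mem_filter] at this
    simp only [dif_pos hu]
    exact ⟨this.1, this.2.1, this.2.2⟩
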